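/- arXiv:2311.11833 — 5 statements merged into one kernel-verified Lean document; each statement's English description precedes it below -/
import Mathlib

section
/- Let n be a positive integer, let A be an invertible n×n real matrix, let D be an n×n real matrix, let b be a vector in ℝⁿ, let α be a positive integer, and let ε be a real number with α · |ε| · ‖A⁻¹ * D‖ < 1, where ‖·‖ is the operator norm induced by the Euclidean vector norm. Define the averaged perturbation solution x̂_α := (1/2)((A + (α·ε) • D)⁻¹ b + (A − (α·ε) • D)⁻¹ b). Then x̂_α = Σ_{k=0}^∞ α^{2k} • ((ε • (A⁻¹ * D))^{2k} * A⁻¹) b, where the series converges absolutely in ℝⁿ. -/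
set_option maxHeartbeats 1000000


open scoped Matrix.Norms.L2Operator

/-- Matrix-vector product, with the vector living in Euclidean space (so that vector
norms are the Euclidean ones). -/
noncomputable def mulVecE {n : ℕ} (M : Matrix (Fin n) (Fin n) ℝ)
    (v : EuclideanSpace ℝ (Fin n)) : EuclideanSpace ℝ (Fin n) :=
  (WithLp.equiv 2 (Fin n → ℝ)).symm (M.mulVec ((WithLp.equiv 2 (Fin n → ℝ)) v))

/-- The averaged perturbation solution
`x̂_α = (1/2)((A + (α ε) • D)⁻¹ b + (A - (α ε) • D)⁻¹ b)` equals the absolutely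
convergent series `∑_k α^(2k) • ((ε • (A⁻¹ D))^(2k) A⁻¹) b` in `ℝⁿ`. -/
theorem averaged_perturbation_solution_series (n : ℕ) (hn : 0 < n)
    (A D : Matrix (Fin n) (Fin n) ℝ) (hA : IsUnit A) (b : EuclideanSpace ℝ (Fin n))
    (α : ℕ) (hα : 0 < α) (ε : ℝ) (hε : (α : ℝ) * |ε| * ‖A⁻¹ * D‖ < 1) :
    Summable (fun k : ℕ =>
        ‖(α : ℝ) ^ (2 * k) • mulVecE ((ε • (A⁻¹ * D)) ^ (2 * k) * A⁻¹) b‖) ∧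
      (1 / 2 : ℝ) • (mulVecE (A + ((α : ℝ) * ε) • D)⁻¹ b
          + mulVecE (A - ((α : ℝ) * ε) • D)⁻¹ b)
        = ∑' k : ℕ, (α : ℝ) ^ (2 * k) • mulVecE ((ε • (A⁻¹ * D)) ^ (2 * k) * A⁻¹) b := by
  haveI : Nonempty (Fin n) := ⟨⟨0, hn⟩⟩
  haveI : CompleteSpace (Matrix (Fin n) (Fin n) ℝ) := FiniteDimensional.complete ℝ _
  set t : ℝ := (α : ℝ) * ε with ht
  set B : Matrix (Fin n) (Fin n) ℝ := A⁻¹ * D with hB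
  have hnorm : ‖t • B‖ = (α : ℝ) * |ε| * ‖B‖ := by
    rw [norm_smul, Real.norm_eq_abs, abs_mul, Nat.abs_cast, mul_assoc]
  have hx : ‖t • B‖ < 1 := by rw [hnorm]; exact hε
  have hxn : ‖-(t • B)‖ < 1 := by rwa [norm_neg]
  -- termwise identity: target terms equal mulVecE ((t•B)^(2k) * A⁻¹) b
  have hterm : ∀ k : ℕ, (α : ℝ) ^ (2 * k) • mulVecE ((ε • B) ^ (2 * k) * A⁻¹) b
      = mulVecE ((t • B) ^ (2 * k) * A⁻¹) b := by
    intro k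
    have h1 : (t • B) ^ (2 * k) = ((α : ℝ) ^ (2 * k)) • ((ε • B) ^ (2 * k)) := by
      rw [smul_pow, smul_pow, smul_smul, ht, mul_pow]
    rw [h1, smul_mul_assoc]
    simp [mulVecE, Matrix.smul_mulVec]
  -- bound on each term
  have hbound : ∀ (M : Matrix (Fin n) (Fin n) ℝ), ‖mulVecE M b‖ ≤ ‖M‖ * ‖b‖ :=
    fun M => Matrix.l2_opNorm_mulVec M b
  have hAinv : A * A⁻¹ = 1 := Matrix.mul_nonsing_inv A ((Matrix.isUnit_iff_isUnit_det A).mp hA)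
  -- Summability of norms
  have hsum : Summable (fun k : ℕ =>
      ‖(α : ℝ) ^ (2 * k) • mulVecE ((ε • B) ^ (2 * k) * A⁻¹) b‖) := by
    apply Summable.of_nonneg_of_le (fun k => norm_nonneg _)
      (f := fun k => (‖t • B‖ ^ 2) ^ k * (‖A⁻¹‖ * ‖b‖))
    · intro k
      rw [hterm k]
      calc ‖mulVecE ((t • B) ^ (2 * k) * A⁻¹) b‖
          ≤ ‖(t • B) ^ (2 * k) * A⁻¹‖ * ‖b‖ := hbound _
        _ ≤ ‖(t • B) ^ (2 * k)‖ * ‖A⁻¹‖ * ‖b‖ := by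
            exact mul_le_mul_of_nonneg_right (norm_mul_le _ _) (norm_nonneg _)
        _ ≤ ‖t • B‖ ^ (2 * k) * ‖A⁻¹‖ * ‖b‖ := by
            exact mul_le_mul_of_nonneg_right
              (mul_le_mul_of_nonneg_right (norm_pow_le _ _) (norm_nonneg _))
              (norm_nonneg _)
        _ = (‖t • B‖ ^ 2) ^ k * (‖A⁻¹‖ * ‖b‖) := by rw [← pow_mul, mul_assoc]
    · exact (summable_geometric_of_lt_one (by positivity)
        (by nlinarith [norm_nonneg (t • B)])).mul_right _
  refine ⟨hsum, ?_⟩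
  -- the continuous linear map M ↦ mulVecE (M * A⁻¹) b
  let L₀ : Matrix (Fin n) (Fin n) ℝ →ₗ[ℝ] EuclideanSpace ℝ (Fin n) :=
    { toFun := fun M => mulVecE (M * A⁻¹) b
      map_add' := by
        intro M N; simp [mulVecE, add_mul, Matrix.add_mulVec]
      map_smul' := by
        intro c M; simp [mulVecE, smul_mul_assoc, Matrix.smul_mulVec] }
  let L : Matrix (Fin n) (Fin n) ℝ →L[ℝ] EuclideanSpace ℝ (Fin n) :=
    L₀.toContinuousLinearMap
  -- geometric series summability
  have hgeo₁ : Summable (fun k : ℕ => (-(t • B)) ^ k) := summable_geometric_of_norm_lt_one hxn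
  have hgeo₂ : Summable (fun k : ℕ => (t • B) ^ k) := summable_geometric_of_norm_lt_one hx
  -- inverse formulas
  have hfac₁ : A + t • D = A * (1 - (-(t • B))) := by
    rw [sub_neg_eq_add, mul_add, mul_one, hB, Matrix.mul_smul, ← Matrix.mul_assoc, hAinv,
      Matrix.one_mul]
  have hfac₂ : A - t • D = A * (1 - t • B) := by
    rw [mul_sub, mul_one, hB, Matrix.mul_smul, ← Matrix.mul_assoc, hAinv, Matrix.one_mul]
  have hinv : ∀ (x : Matrix (Fin n) (Fin n) ℝ) (hx1 : ‖x‖ < 1),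
      (A * (1 - x))⁻¹ = (∑' k : ℕ, x ^ k) * A⁻¹ := by
    intro x hx1
    rw [Matrix.mul_inv_rev, Matrix.nonsing_inv_eq_ringInverse (1 - x),
      ← geom_series_eq_inverse x hx1]
  have hinv₁ : (A + t • D)⁻¹ = (∑' k : ℕ, (-(t • B)) ^ k) * A⁻¹ := by
    rw [hfac₁, hinv _ hxn]
  have hinv₂ : (A - t • D)⁻¹ = (∑' k : ℕ, (t • B) ^ k) * A⁻¹ := by
    rw [hfac₂, hinv _ hx]
  -- push mulVecE through the sums
  have hL₁ : mulVecE (A + t • D)⁻¹ b = ∑' k : ℕ, mulVecE ((-(t • B)) ^ k * A⁻¹) b := by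
    rw [hinv₁]
    exact (L.map_tsum hgeo₁)
  have hL₂ : mulVecE (A - t • D)⁻¹ b = ∑' k : ℕ, mulVecE ((t • B) ^ k * A⁻¹) b := by
    rw [hinv₂]
    exact (L.map_tsum hgeo₂)
  have hs₁ : Summable (fun k : ℕ => mulVecE ((-(t • B)) ^ k * A⁻¹) b) := hgeo₁.map L L.continuous
  have hs₂ : Summable (fun k : ℕ => mulVecE ((t • B) ^ k * A⁻¹) b) := hgeo₂.map L L.continuous
  rw [hL₁, hL₂, ← Summable.tsum_add hs₁ hs₂, ← Summable.tsum_const_smul (1 / 2 : ℝ) (hs₁.add hs₂)]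
  -- now identify with the even subseries
  have hvanish : ∀ k : ℕ, k ∉ Set.range (fun m : ℕ => 2 * m) →
      (1 / 2 : ℝ) • (mulVecE ((-(t • B)) ^ k * A⁻¹) b + mulVecE ((t • B) ^ k * A⁻¹) b) = 0 := by
    intro k hk
    have hodd : Odd k := by
      rcases Nat.even_or_odd k with he | ho
      · obtain ⟨r, hr⟩ := he
        exact absurd ⟨r, show 2 * r = k by omega⟩ hk
      · exact ho
    rw [hodd.neg_pow]
    simp [mulVecE, Matrix.neg_mul, Matrix.neg_mulVec]
  have hinj : Function.Injective (fun m : ℕ => 2 * m) := fun p q h => by have h' : 2 * p = 2 * q := h; omega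
  rw [← Function.Injective.tsum_eq hinj (by
    intro k hk
    by_contra hkr
    exact hk (hvanish k hkr))]
  apply tsum_congr
  intro m
  have heven : Even (2 * m) := ⟨m, by ring⟩
  rw [hterm m, heven.neg_pow, ← two_smul ℝ, smul_smul]
  norm_num
end

section
/- Let n and m be positive integers, let A be an invertible n×n real matrix, let D be an n×n real matrix, let b ∈ ℝⁿ, and let ε be a real number with m · |ε| · ‖A⁻¹ * D‖ < 1, where ‖·‖ is the operator norm induced by the Euclidean vector norm. For each integer α with 1 ≤ α ≤ m define the averaged perturbation solution x̂_α := (1/2)((A + (α·ε) • D)⁻¹ b + (A − (α·ε) • D)⁻¹ b). Let β ∈ ℝ^m satisfy Γ_mᵀ β = e₁, where Γ_m is the m×m matrix with entries (Γ_m)_{α,j} = α^{2j} for α = 1,…,m and j = 0,…,m−1 and e₁ = (1,0,…,0)ᵀ. Then the β-weighted combination cancels all powers of ε below 2m: Σ_{α=1}^m β_α x̂_α = A⁻¹ b + Σ_{k=m}^∞ (Σ_{α=1}^m β_α α^{2k}) • ((ε • (A⁻¹ * D))^{2k} * A⁻¹) b, where the series converges absolutely. -/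
open Matrix
open scoped Matrix.Norms.L2Operator

/-- The averaged perturbation solution
`x̂_α = (1/2)((A + (α ε) • D)⁻¹ b + (A - (α ε) • D)⁻¹ b)`. -/
noncomputable def xhat {n : ℕ} (A D : Matrix (Fin n) (Fin n) ℝ)
    (b : EuclideanSpace ℝ (Fin n)) (ε α : ℝ) : EuclideanSpace ℝ (Fin n) :=
  (1 / 2 : ℝ) • (mulVecE (A + (α * ε) • D)⁻¹ b + mulVecE (A - (α * ε) • D)⁻¹ b)

variable {n : ℕ}

lemma mulVecE_add (M N : Matrix (Fin n) (Fin n) ℝ) (b : EuclideanSpace ℝ (Fin n)) :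
    mulVecE (M + N) b = mulVecE M b + mulVecE N b := by
  simp [mulVecE, Matrix.add_mulVec]

lemma mulVecE_smul (c : ℝ) (M : Matrix (Fin n) (Fin n) ℝ) (b : EuclideanSpace ℝ (Fin n)) :
    mulVecE (c • M) b = c • mulVecE M b := by
  simp [mulVecE, Matrix.smul_mulVec]

noncomputable def mulVecCLM (b : EuclideanSpace ℝ (Fin n)) :
    Matrix (Fin n) (Fin n) ℝ →L[ℝ] EuclideanSpace ℝ (Fin n) :=
  LinearMap.toContinuousLinearMap
    { toFun := fun M => mulVecE M b
      map_add' := fun M N => mulVecE_add M N b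
      map_smul' := fun c M => mulVecE_smul c M b }

lemma mulVecCLM_apply (b : EuclideanSpace ℝ (Fin n)) (M : Matrix (Fin n) (Fin n) ℝ) :
    mulVecCLM b M = mulVecE M b := rfl

lemma norm_mulVecE_le (M : Matrix (Fin n) (Fin n) ℝ) (b : EuclideanSpace ℝ (Fin n)) :
    ‖mulVecE M b‖ ≤ ‖M‖ * ‖b‖ :=
  M.l2_opNorm_mulVec b

lemma mulVecE_mul (M N : Matrix (Fin n) (Fin n) ℝ) (b : EuclideanSpace ℝ (Fin n)) :
    mulVecE (M * N) b = mulVecE M (mulVecE N b) := by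
  simp [mulVecE, ← Matrix.mulVec_mulVec]

/-- half-sum of the two Neumann series picks out the even part -/
lemma half_even {E : Type*} [NormedAddCommGroup E] [NormedSpace ℝ E] [CompleteSpace E]
    (L : Matrix (Fin n) (Fin n) ℝ →L[ℝ] E) (u : Matrix (Fin n) (Fin n) ℝ) (hu : ‖u‖ < 1) :
    (1 / 2 : ℝ) • ((∑' j : ℕ, L ((-u) ^ j)) + ∑' j : ℕ, L (u ^ j))
      = ∑' k : ℕ, L (u ^ (2 * k)) := by
  haveI : CompleteSpace (Matrix (Fin n) (Fin n) ℝ) := FiniteDimensional.complete ℝ _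
  have hu' : ‖-u‖ < 1 := by rwa [norm_neg]
  have hs1 : Summable fun j : ℕ => (-u) ^ j := summable_geometric_of_norm_lt_one hu'
  have hs2 : Summable fun j : ℕ => u ^ j := summable_geometric_of_norm_lt_one hu
  have hsL1 : Summable fun j : ℕ => L ((-u) ^ j) :=
    hs1.map (L.toLinearMap.toAddMonoidHom) L.continuous
  have hsL2 : Summable fun j : ℕ => L (u ^ j) :=
    hs2.map (L.toLinearMap.toAddMonoidHom) L.continuous
  set f : ℕ → E := fun j => (1 / 2 : ℝ) • (L ((-u) ^ j) + L (u ^ j)) with hf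
  have hfe : ∀ k, f (2 * k) = L (u ^ (2 * k)) := by
    intro k
    have h1 : (-u) ^ (2 * k) = u ^ (2 * k) := (even_two_mul k).neg_pow u
    rw [hf]
    simp only [h1, ← two_smul ℝ (L (u ^ (2 * k))), smul_smul]
    norm_num
  have hfo : ∀ k, f (2 * k + 1) = 0 := by
    intro k
    have h1 : (-u) ^ (2 * k + 1) = -(u ^ (2 * k + 1)) := (odd_two_mul_add_one k).neg_pow u
    simp [hf, h1]
  have hsum2k : Summable fun k : ℕ => L (u ^ (2 * k)) := by
    have h2 : ‖u ^ 2‖ < 1 := by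
      have := norm_mul_le u u
      have h0 := norm_nonneg u
      rw [sq]
      nlinarith
    have : Summable fun k : ℕ => (u ^ 2) ^ k := summable_geometric_of_norm_lt_one h2
    have := this.map (L.toLinearMap.toAddMonoidHom) L.continuous
    simpa [← pow_mul, Function.comp_def] using this
  have he : Summable fun k : ℕ => f (2 * k) := by
    simpa only [hfe] using hsum2k
  have ho : Summable fun k : ℕ => f (2 * k + 1) := by
    simp only [hfo]; exact summable_zero
  have heo := tsum_even_add_odd he ho
  calc (1 / 2 : ℝ) • ((∑' j : ℕ, L ((-u) ^ j)) + ∑' j : ℕ, L (u ^ j))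
      = (1 / 2 : ℝ) • ∑' j : ℕ, (L ((-u) ^ j) + L (u ^ j)) := by rw [Summable.tsum_add hsL1 hsL2]
    _ = ∑' j : ℕ, f j := (Summable.tsum_const_smul _ (hsL1.add hsL2)).symm
    _ = (∑' k : ℕ, f (2 * k)) + ∑' k : ℕ, f (2 * k + 1) := heo.symm
    _ = ∑' k : ℕ, L (u ^ (2 * k)) := by
        simp only [hfo, tsum_zero, add_zero]
        exact tsum_congr hfe


set_option maxHeartbeats 1000000 in
/-- If `β` solves `Γ_mᵀ β = e₁`, then the `β`-weighted combination of the averaged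
perturbation solutions cancels all powers of `ε` below `2m`:
`∑_α β_α x̂_α = A⁻¹ b + ∑_{k ≥ m} (∑_α β_α α^(2k)) • ((ε • (A⁻¹ D))^(2k) A⁻¹) b`,
where the series converges absolutely. -/
theorem beta_combination_cancels_low_powers (n m : ℕ) (hn : 0 < n) (hm : 0 < m)
    (A D : Matrix (Fin n) (Fin n) ℝ) (hA : IsUnit A) (b : EuclideanSpace ℝ (Fin n))
    (ε : ℝ) (hε : (m : ℝ) * |ε| * ‖A⁻¹ * D‖ < 1) (β : Fin m → ℝ)
    (hβ : (Matrix.of fun α j : Fin m => (((α : ℕ) + 1 : ℝ)) ^ (2 * (j : ℕ)))ᵀ.mulVec β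
        = fun i : Fin m => if (i : ℕ) = 0 then (1 : ℝ) else 0) :
    Summable (fun k : ℕ =>
        ‖(∑ α : Fin m, β α * (((α : ℕ) + 1 : ℝ)) ^ (2 * (m + k))) •
            mulVecE ((ε • (A⁻¹ * D)) ^ (2 * (m + k)) * A⁻¹) b‖) ∧
      ∑ α : Fin m, β α • xhat A D b ε ((α : ℕ) + 1)
        = mulVecE A⁻¹ b
            + ∑' k : ℕ, (∑ α : Fin m, β α * (((α : ℕ) + 1 : ℝ)) ^ (2 * (m + k))) •
                mulVecE ((ε • (A⁻¹ * D)) ^ (2 * (m + k)) * A⁻¹) b := by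
  classical
  haveI : CompleteSpace (Matrix (Fin n) (Fin n) ℝ) := FiniteDimensional.complete ℝ _
  set B : Matrix (Fin n) (Fin n) ℝ := A⁻¹ * D with hBdef
  set r : ℝ := (m : ℝ) * |ε| * ‖B‖ with hrdef
  have hr0 : 0 ≤ r := by positivity
  have hAdet : IsUnit A.det := (Matrix.isUnit_iff_isUnit_det A).mp hA
  have hA1 : A * A⁻¹ = 1 := Matrix.mul_nonsing_inv A hAdet
  set c : EuclideanSpace ℝ (Fin n) := mulVecE A⁻¹ b with hcdef
  set L : Matrix (Fin n) (Fin n) ℝ →L[ℝ] EuclideanSpace ℝ (Fin n) := mulVecCLM c with hLdef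
  set v : ℕ → EuclideanSpace ℝ (Fin n) := fun k => L ((ε • B) ^ (2 * k)) with hvdef
  set g : ℕ → EuclideanSpace ℝ (Fin n) :=
    fun k => (∑ α : Fin m, β α * (((α : ℕ) + 1 : ℝ)) ^ (2 * k)) • v k with hgdef
  -- basic norm facts
  have hαm : ∀ α : Fin m, (((α : ℕ) + 1 : ℝ)) ≤ (m : ℝ) := by
    intro α; exact_mod_cast α.2
  have hα0 : ∀ α : Fin m, (0 : ℝ) ≤ ((α : ℕ) + 1 : ℝ) := fun α => by positivity
  have key : ∀ t : ℝ, ‖t • B‖ < 1 → (A + t • D)⁻¹ = (∑' j : ℕ, (-(t • B)) ^ j) * A⁻¹ := by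
    intro t ht
    have hfac : A + t • D = A * (1 - -(t • B)) := by
      rw [sub_neg_eq_add, mul_add, mul_one, mul_smul_comm, hBdef, ← Matrix.mul_assoc, hA1,
        Matrix.one_mul]
    rw [hfac, Matrix.mul_inv_rev, Matrix.nonsing_inv_eq_ringInverse,
      ← geom_series_eq_inverse _ (by rwa [norm_neg])]
  -- the norm smallness for t = (α+1) ε
  have hts : ∀ α : Fin m, ‖((((α : ℕ) + 1 : ℝ)) * ε) • B‖ < 1 := by
    intro α
    rw [norm_smul, Real.norm_eq_abs, abs_mul, abs_of_nonneg (hα0 α)]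
    refine lt_of_le_of_lt ?_ hε
    calc (((α : ℕ) + 1 : ℝ)) * |ε| * ‖B‖ = (((α : ℕ) + 1 : ℝ)) * (|ε| * ‖B‖) := by ring
      _ ≤ (m : ℝ) * (|ε| * ‖B‖) := mul_le_mul_of_nonneg_right (hαm α) (by positivity)
      _ = (m : ℝ) * |ε| * ‖B‖ := by ring
  -- xhat as a power series
  have hxhat : ∀ α : Fin m,
      xhat A D b ε ((α : ℕ) + 1) = ∑' k : ℕ, (((α : ℕ) + 1 : ℝ)) ^ (2 * k) • v k := by
    intro α
    set t : ℝ := (((α : ℕ) + 1 : ℝ)) * ε with htdef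
    have hu : ‖t • B‖ < 1 := hts α
    have hu' : ‖-(t • B)‖ < 1 := by rwa [norm_neg]
    have hs1 : Summable fun j : ℕ => (-(t • B)) ^ j := summable_geometric_of_norm_lt_one hu'
    have hs2 : Summable fun j : ℕ => (t • B) ^ j := summable_geometric_of_norm_lt_one hu
    have hplus : mulVecE (A + t • D)⁻¹ b = ∑' j : ℕ, L ((-(t • B)) ^ j) := by
      rw [key t hu, mulVecE_mul, ← hcdef, ← mulVecCLM_apply c, ← hLdef, L.map_tsum hs1]
    have hminus : mulVecE (A - t • D)⁻¹ b = ∑' j : ℕ, L ((t • B) ^ j) := by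
      have h2 : A - t • D = A + (-t) • D := by rw [sub_eq_add_neg, neg_smul]
      have h3 := key (-t) (by rw [neg_smul, norm_neg]; exact hu)
      rw [h2, h3]
      simp only [neg_smul, neg_neg]
      rw [mulVecE_mul, ← hcdef, ← mulVecCLM_apply c, ← hLdef, L.map_tsum hs2]
    have hx : xhat A D b ε ((α : ℕ) + 1)
        = (1 / 2 : ℝ) • (mulVecE (A + t • D)⁻¹ b + mulVecE (A - t • D)⁻¹ b) := rfl
    rw [hx, hplus, hminus, half_even L (t • B) hu]
    refine tsum_congr fun k => ?_
    rw [hvdef]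
    have : (t • B) ^ (2 * k) = (((α : ℕ) + 1 : ℝ)) ^ (2 * k) • (ε • B) ^ (2 * k) := by
      rw [htdef, ← smul_smul, smul_pow]
    rw [this, L.map_smul]
  -- summability bounds
  have hr2lt : r ^ 2 < 1 := by nlinarith
  have hvk : ∀ k, ‖v k‖ ≤ (|ε| * ‖B‖) ^ (2 * k) * ‖c‖ := by
    intro k
    match k with
    | 0 =>
      have h1 : v 0 = c := by
        show L ((ε • B) ^ (2 * 0)) = c
        rw [mul_zero, pow_zero, hLdef, mulVecCLM_apply]
        simp [mulVecE]
      rw [h1]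
      simp
    | Nat.succ k =>
      refine (norm_mulVecE_le _ _).trans ?_
      gcongr
      calc ‖(ε • B) ^ (2 * (k + 1))‖ ≤ ‖ε • B‖ ^ (2 * (k + 1)) := norm_pow_le' _ (by omega)
        _ = (|ε| * ‖B‖) ^ (2 * (k + 1)) := by rw [norm_smul, Real.norm_eq_abs]
  have haux : ∀ (α : Fin m) (k : ℕ),
      ‖(((α : ℕ) + 1 : ℝ)) ^ (2 * k) • v k‖ ≤ ‖c‖ * (r ^ 2) ^ k := by
    intro α k
    rw [norm_smul, Real.norm_eq_abs, abs_pow, abs_of_nonneg (hα0 α)]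
    calc (((α : ℕ) + 1 : ℝ)) ^ (2 * k) * ‖v k‖
        ≤ (m : ℝ) ^ (2 * k) * ((|ε| * ‖B‖) ^ (2 * k) * ‖c‖) := by
          refine mul_le_mul ?_ (hvk k) (norm_nonneg _) (by positivity)
          exact pow_le_pow_left₀ (hα0 α) (hαm α) _
      _ = ‖c‖ * (r ^ 2) ^ k := by
          have hx : (m : ℝ) * (|ε| * ‖B‖) = r := by rw [hrdef]; ring
          calc (m : ℝ) ^ (2 * k) * ((|ε| * ‖B‖) ^ (2 * k) * ‖c‖)
              = ((m : ℝ) * (|ε| * ‖B‖)) ^ (2 * k) * ‖c‖ := by rw [mul_pow]; ring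
            _ = (r ^ 2) ^ k * ‖c‖ := by rw [hx, pow_mul]
            _ = ‖c‖ * (r ^ 2) ^ k := mul_comm _ _
  have hgeo : Summable fun k : ℕ => ‖c‖ * (r ^ 2) ^ k :=
    (summable_geometric_of_lt_one (by positivity) hr2lt).mul_left _
  have hSa : ∀ α : Fin m, Summable fun k : ℕ => (((α : ℕ) + 1 : ℝ)) ^ (2 * k) • v k := by
    intro α
    exact Summable.of_norm_bounded hgeo (haux α)
  have hg_eq : ∀ k, g k = ∑ α : Fin m, β α • ((((α : ℕ) + 1 : ℝ)) ^ (2 * k) • v k) := by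
    intro k
    rw [hgdef]
    simp only [Finset.sum_smul, mul_smul]
  have hgb : ∀ k, ‖g k‖ ≤ ((∑ α : Fin m, |β α|) * ‖c‖) * (r ^ 2) ^ k := by
    intro k
    rw [hg_eq]
    refine (norm_sum_le _ _).trans ?_
    calc ∑ α : Fin m, ‖β α • ((((α : ℕ) + 1 : ℝ)) ^ (2 * k) • v k)‖
        ≤ ∑ α : Fin m, |β α| * (‖c‖ * (r ^ 2) ^ k) := by
          refine Finset.sum_le_sum fun α _ => ?_
          rw [norm_smul, Real.norm_eq_abs]
          exact mul_le_mul_of_nonneg_left (haux α k) (abs_nonneg _)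
      _ = ((∑ α : Fin m, |β α|) * ‖c‖) * (r ^ 2) ^ k := by
          rw [← Finset.sum_mul]; ring
  have hgnorm : Summable fun k : ℕ => ‖g k‖ :=
    Summable.of_nonneg_of_le (fun k => norm_nonneg _) hgb
      ((summable_geometric_of_lt_one (by positivity) hr2lt).mul_left _)
  have hg : Summable g := hgnorm.of_norm
  -- coefficient identity
  have hc : ∀ j : Fin m,
      (∑ α : Fin m, β α * (((α : ℕ) + 1 : ℝ)) ^ (2 * (j : ℕ)))
        = if (j : ℕ) = 0 then (1 : ℝ) else 0 := by
    intro j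
    have h := congrFun hβ j
    simpa [Matrix.mulVec, dotProduct, Matrix.transpose_apply, mul_comm] using h
  -- the goal terms are g (m + k)
  have hconv : ∀ k : ℕ,
      (∑ α : Fin m, β α * (((α : ℕ) + 1 : ℝ)) ^ (2 * (m + k))) •
          mulVecE ((ε • B) ^ (2 * (m + k)) * A⁻¹) b = g (m + k) := by
    intro k
    rw [mulVecE_mul]
    rfl
  constructor
  · have : (fun k : ℕ => ‖(∑ α : Fin m, β α * (((α : ℕ) + 1 : ℝ)) ^ (2 * (m + k))) •
        mulVecE ((ε • B) ^ (2 * (m + k)) * A⁻¹) b‖) = fun k => ‖g (k + m)‖ := by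
      funext k
      rw [hconv k, add_comm]
    rw [this]
    exact (summable_nat_add_iff m).mpr hgnorm
  · have hrange : ∑ i ∈ Finset.range m, g i = c := by
      rw [Finset.sum_eq_single_of_mem 0 (Finset.mem_range.mpr hm)]
      · have h0 : (∑ α : Fin m, β α * (((α : ℕ) + 1 : ℝ)) ^ (2 * (0 : ℕ))) = 1 := by
          have := hc ⟨0, hm⟩
          exact this
        have hv0 : v 0 = c := by
          show L ((ε • B) ^ (2 * 0)) = c
          rw [mul_zero, pow_zero, hLdef, mulVecCLM_apply]
          simp [mulVecE]
        show (∑ α : Fin m, β α * (((α : ℕ) + 1 : ℝ)) ^ (2 * 0)) • v 0 = c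
        rw [h0, one_smul, hv0]
      · intro i hi hne
        have h0 : (∑ α : Fin m, β α * (((α : ℕ) + 1 : ℝ)) ^ (2 * i)) = 0 := by
          have := hc ⟨i, Finset.mem_range.mp hi⟩
          simpa [hne] using this
        rw [hgdef]
        simp only [h0, zero_smul]
    calc ∑ α : Fin m, β α • xhat A D b ε ((α : ℕ) + 1)
        = ∑ α : Fin m, ∑' k : ℕ, β α • ((((α : ℕ) + 1 : ℝ)) ^ (2 * k) • v k) := by
          refine Finset.sum_congr rfl fun α _ => ?_
          rw [hxhat α, ← Summable.tsum_const_smul (β α) (hSa α)]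
      _ = ∑' k : ℕ, ∑ α : Fin m, β α • ((((α : ℕ) + 1 : ℝ)) ^ (2 * k) • v k) :=
          (Summable.tsum_finsetSum fun α _ => (hSa α).const_smul (β α)).symm
      _ = ∑' k : ℕ, g k := tsum_congr fun k => (hg_eq k).symm
      _ = (∑ i ∈ Finset.range m, g i) + ∑' k : ℕ, g (k + m) := (Summable.sum_add_tsum_nat_add m hg).symm
      _ = c + ∑' k : ℕ, (∑ α : Fin m, β α * (((α : ℕ) + 1 : ℝ)) ^ (2 * (m + k))) •
            mulVecE ((ε • B) ^ (2 * (m + k)) * A⁻¹) b := by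
          rw [hrange]
          congr 1
          refine tsum_congr fun k => ?_
          rw [hconv k, add_comm]
end

section
/- (Theorem 1) Let n and m be positive integers, let A be an invertible n×n real matrix, let D be an n×n real matrix, and let b ∈ ℝⁿ with ‖b‖ = 1. For a real number ε and integer α with 1 ≤ α ≤ m, define the averaged perturbation solution x̂_α(ε) := (1/2)((A + (α·ε) • D)⁻¹ b + (A − (α·ε) • D)⁻¹ b). Then there exist real coefficients β₁,…,β_m and constants C > 0 and ε₀ > 0 such that for every real ε with 0 < |ε| < ε₀, all the matrices A ± (α·ε) • D (α = 1,…,m) are invertible and ‖Σ_{α=1}^m β_α x̂_α(ε) − A⁻¹ b‖ ≤ C · |ε|^{2m}; that is, a linear combination of the m averaged perturbation solutions recovers the true solution x* = A⁻¹ b with O(ε^{2m}) accuracy. -/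
set_option maxHeartbeats 2000000
set_option synthInstance.maxHeartbeats 1000000

open scoped Matrix.Norms.L2Operator

theorem inv_expansion' {R : Type*} [Ring R] (u v : Rˣ) (s : R) (hs : (v : R) = u + s) (N : ℕ) :
    (↑v⁻¹ : R) = (∑ k ∈ Finset.range N, (-1:R)^k * (((↑u⁻¹ : R) * s)^k * ↑u⁻¹))
      + (-1:R)^N * (((↑u⁻¹ : R) * s)^N * ↑v⁻¹) := by
  set p : R := (↑u⁻¹ : R) * s with hp
  have key : (↑v⁻¹ : R) = ↑u⁻¹ - p * ↑v⁻¹ := by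
    have h1 : ((↑u⁻¹ : R) - p * ↑v⁻¹) * ↑v = 1 := by
      have h2 : (p * ↑v⁻¹) * ↑v = p := by rw [mul_assoc, Units.inv_mul, mul_one]
      rw [sub_mul, h2, hs, hp, mul_add, Units.inv_mul]
      abel
    exact Units.inv_eq_of_mul_eq_one_left h1
  induction N with
  | zero => simp
  | succ N ih =>
    have step : (-1:R)^N * (p^N * ↑v⁻¹)
        = (-1:R)^N * (p^N * ↑u⁻¹) + (-1:R)^(N+1) * (p^(N+1) * ↑v⁻¹) := by
      nth_rewrite 1 [key]
      rw [pow_succ, pow_succ]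
      noncomm_ring
    rw [Finset.sum_range_succ, add_assoc, ← step]
    exact ih

theorem exists_beta' (m : ℕ) :
    ∃ β : Fin m → ℝ, ∀ k < m,
      (∑ α : Fin m, β α * (((α : ℕ) + 1 : ℝ)^2)^k) = if k = 0 then 1 else 0 := by
  set v : Fin m → ℝ := fun α => ((α : ℕ) + 1 : ℝ)^2 with hv
  have hinj : Set.InjOn v ↑(Finset.univ : Finset (Fin m)) := by
    intro a _ b _ hab
    have h1 : ((a : ℕ) + 1 : ℝ) = ((b : ℕ) + 1 : ℝ) := by
      have ha : (0:ℝ) ≤ ((a:ℕ) + 1 : ℝ) := by positivity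
      have hb : (0:ℝ) ≤ ((b:ℕ) + 1 : ℝ) := by positivity
      have : (((a:ℕ) + 1 : ℝ))^2 = (((b:ℕ) + 1 : ℝ))^2 := hab
      nlinarith
    have h2 : ((a:ℕ):ℝ) = ((b:ℕ):ℝ) := by linarith
    exact Fin.ext (Nat.cast_injective h2)
  refine ⟨fun α => (Lagrange.basis Finset.univ v α).eval 0, fun k hk => ?_⟩
  have hdeg : (Polynomial.X ^ k : Polynomial ℝ).degree
      < ((Finset.univ : Finset (Fin m)).card : WithBot ℕ) := by
    rw [Polynomial.degree_X_pow]
    simpa using (by exact_mod_cast hk : (k : WithBot ℕ) < (m : WithBot ℕ))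
  have hinterp := Lagrange.eq_interpolate (f := (Polynomial.X ^ k : Polynomial ℝ)) hinj hdeg
  have heval := congrArg (Polynomial.eval (0:ℝ)) hinterp
  rw [Lagrange.interpolate_apply] at heval
  simp only [Polynomial.eval_finset_sum, Polynomial.eval_mul, Polynomial.eval_C,
    Polynomial.eval_pow, Polynomial.eval_X] at heval
  have hz : ((if k = 0 then 1 else 0) : ℝ) = (0:ℝ)^k := by
    rcases Nat.eq_zero_or_pos k with h|h
    · simp [h]
    · simp [Nat.pos_iff_ne_zero.mp h]
  rw [hz, heval]
  exact Finset.sum_congr rfl fun α _ => by simp [hv]; ring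

theorem sum_range_two_mul' {M : Type*} [AddCommMonoid M] (m : ℕ) (f : ℕ → M) :
    ∑ k ∈ Finset.range (2*m), f k = ∑ j ∈ Finset.range m, (f (2*j) + f (2*j+1)) := by
  induction m with
  | zero => simp
  | succ m ih =>
    rw [show 2*(m+1) = 2*m+1+1 by ring, Finset.sum_range_succ, Finset.sum_range_succ, ih,
      Finset.sum_range_succ, add_assoc]

/-- `(c • f) * g = c • (f * g)` for continuous linear maps. -/
theorem clm_smul_mul {n : ℕ} (c : ℝ)
    (f g : EuclideanSpace ℝ (Fin n) →L[ℝ] EuclideanSpace ℝ (Fin n)) :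
    (c • f) * g = c • (f * g) := by
  ext x; simp [ContinuousLinearMap.mul_apply]

theorem clm_mul_smul {n : ℕ} (c : ℝ)
    (f g : EuclideanSpace ℝ (Fin n) →L[ℝ] EuclideanSpace ℝ (Fin n)) :
    f * (c • g) = c • (f * g) := by
  ext x; simp [ContinuousLinearMap.mul_apply]

theorem clm_smul_pow {n : ℕ} (c : ℝ)
    (f : EuclideanSpace ℝ (Fin n) →L[ℝ] EuclideanSpace ℝ (Fin n)) (k : ℕ) :
    (c • f)^k = c^k • f^k := by
  induction k with
  | zero => simp
  | succ k ih =>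
    rw [pow_succ, pow_succ, ih, clm_smul_mul, clm_mul_smul, smul_smul, pow_succ]

/-- Theorem 1: there exist coefficients `β₁, …, β_m`, `C > 0` and `ε₀ > 0` such that
for every `ε` with `0 < |ε| < ε₀`, all matrices `A ± (α ε) • D` are invertible and the
linear combination `∑_α β_α x̂_α(ε)` recovers `x* = A⁻¹ b` with `O(ε^(2m))` accuracy. -/
theorem linear_combination_recovers_solution (n m : ℕ) (hn : 0 < n) (hm : 0 < m)
    (A D : Matrix (Fin n) (Fin n) ℝ) (hA : IsUnit A)
    (b : EuclideanSpace ℝ (Fin n)) (hb : ‖b‖ = 1) :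
    ∃ β : Fin m → ℝ, ∃ C > (0 : ℝ), ∃ ε₀ > (0 : ℝ), ∀ ε : ℝ, 0 < |ε| → |ε| < ε₀ →
      (∀ α : Fin m, IsUnit (A + ((((α : ℕ) + 1 : ℝ)) * ε) • D)
          ∧ IsUnit (A - ((((α : ℕ) + 1 : ℝ)) * ε) • D)) ∧
      ‖(∑ α : Fin m, β α • xhat A D b ε ((α : ℕ) + 1)) - mulVecE A⁻¹ b‖
          ≤ C * |ε| ^ (2 * m) := by
  classical
  set φ : Matrix (Fin n) (Fin n) ℝ
      ≃⋆ₐ[ℝ] (EuclideanSpace ℝ (Fin n) →L[ℝ] EuclideanSpace ℝ (Fin n)) :=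
    Matrix.toEuclideanCLM (𝕜 := ℝ)
  have hPhi : ∀ (M : Matrix (Fin n) (Fin n) ℝ) (x : EuclideanSpace ℝ (Fin n)),
      mulVecE M x = φ M x := fun _ _ => rfl
  have haU : IsUnit (φ A) := hA.map φ
  obtain ⟨u, hu⟩ := haU
  set K : ℝ := ‖(↑u⁻¹ : EuclideanSpace ℝ (Fin n) →L[ℝ] EuclideanSpace ℝ (Fin n))‖ with hK
  set Kd : ℝ := ‖φ D‖ with hKd
  set q : EuclideanSpace ℝ (Fin n) →L[ℝ] EuclideanSpace ℝ (Fin n) := ↑u⁻¹ * φ D with hq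
  have hKnn : 0 ≤ K := norm_nonneg _
  have hKdnn : 0 ≤ Kd := norm_nonneg _
  have hqK : ‖q‖ ≤ K * Kd := norm_mul_le _ _
  -- key facts for each small scalar t
  have hT : ∀ t : ℝ, |t| * (K * Kd) < 1/2 →
      IsUnit (A + t • D) ∧
      (φ ((A + t • D)⁻¹) = (∑ k ∈ Finset.range (2*m),
          (-t)^k • (q^k * (↑u⁻¹ : EuclideanSpace ℝ (Fin n) →L[ℝ] EuclideanSpace ℝ (Fin n))))
        + t^(2*m) • (q^(2*m) * φ ((A + t • D)⁻¹))) ∧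
      ‖φ ((A + t • D)⁻¹)‖ ≤ 2*K := by
    intro t ht
    have htq : ‖t • q‖ < 1/2 := by
      rw [norm_smul t q, Real.norm_eq_abs]
      calc |t| * ‖q‖ ≤ |t| * (K * Kd) := mul_le_mul_of_nonneg_left hqK (abs_nonneg t)
        _ < 1/2 := ht
    have h1 : ‖-(t • q)‖ < 1 := by rw [norm_neg]; linarith
    set w₁ : (EuclideanSpace ℝ (Fin n) →L[ℝ] EuclideanSpace ℝ (Fin n))ˣ :=
      Units.oneSub (-(t • q)) h1 with hw₁def
    have hw₁ : (↑w₁ : EuclideanSpace ℝ (Fin n) →L[ℝ] EuclideanSpace ℝ (Fin n)) = 1 + t • q := by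
      rw [hw₁def, Units.val_oneSub, sub_neg_eq_add]
    set v : (EuclideanSpace ℝ (Fin n) →L[ℝ] EuclideanSpace ℝ (Fin n))ˣ := u * w₁ with hvdef
    have huq : (↑u : EuclideanSpace ℝ (Fin n) →L[ℝ] EuclideanSpace ℝ (Fin n)) * q = φ D := by
      rw [hq, ← mul_assoc, Units.mul_inv, one_mul]
    have hv : (↑v : EuclideanSpace ℝ (Fin n) →L[ℝ] EuclideanSpace ℝ (Fin n))
        = φ A + t • φ D := by
      rw [hvdef, Units.val_mul, hw₁, mul_add, mul_one, clm_mul_smul, huq, hu]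
    have hv' : (↑v : EuclideanSpace ℝ (Fin n) →L[ℝ] EuclideanSpace ℝ (Fin n))
        = φ (A + t • D) := by
      rw [hv, map_add, map_smul]
    have hMunit : IsUnit (A + t • D) := by
      have h2 : IsUnit (φ (A + t • D)) := hv' ▸ v.isUnit
      have h3 := h2.map φ.symm
      simpa using h3
    have hdet : IsUnit (A + t • D).det := (Matrix.isUnit_iff_isUnit_det _).mp hMunit
    have hMinv : φ ((A + t • D)⁻¹)
        = (↑v⁻¹ : EuclideanSpace ℝ (Fin n) →L[ℝ] EuclideanSpace ℝ (Fin n)) := by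
      have h4 : φ ((A + t • D)⁻¹) * ↑v = 1 := by
        rw [hv', ← map_mul, Matrix.nonsing_inv_mul _ hdet, map_one]
      exact (Units.inv_eq_of_mul_eq_one_left h4).symm
    have hwinv : (↑w₁⁻¹ : EuclideanSpace ℝ (Fin n) →L[ℝ] EuclideanSpace ℝ (Fin n))
        = 1 - (t • q) * ↑w₁⁻¹ := by
      have h5 : (↑w₁ : EuclideanSpace ℝ (Fin n) →L[ℝ] EuclideanSpace ℝ (Fin n)) * ↑w₁⁻¹ = 1 :=
        Units.mul_inv _
      rw [hw₁, add_mul, one_mul] at h5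
      exact eq_sub_of_add_eq h5
    have hone : ‖(1 : EuclideanSpace ℝ (Fin n) →L[ℝ] EuclideanSpace ℝ (Fin n))‖ ≤ 1 := by
      rw [ContinuousLinearMap.one_def]; exact ContinuousLinearMap.norm_id_le
    have hw₁inv : ‖(↑w₁⁻¹ : EuclideanSpace ℝ (Fin n) →L[ℝ] EuclideanSpace ℝ (Fin n))‖ ≤ 2 := by
      have h6 : ‖(↑w₁⁻¹ : EuclideanSpace ℝ (Fin n) →L[ℝ] EuclideanSpace ℝ (Fin n))‖
          ≤ 1 + ‖t • q‖ * ‖(↑w₁⁻¹ : EuclideanSpace ℝ (Fin n) →L[ℝ] EuclideanSpace ℝ (Fin n))‖ := by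
        calc ‖(↑w₁⁻¹ : EuclideanSpace ℝ (Fin n) →L[ℝ] EuclideanSpace ℝ (Fin n))‖
            = ‖1 - (t • q) * (↑w₁⁻¹ : EuclideanSpace ℝ (Fin n) →L[ℝ] EuclideanSpace ℝ (Fin n))‖ := by
              rw [← hwinv]
          _ ≤ ‖(1 : EuclideanSpace ℝ (Fin n) →L[ℝ] EuclideanSpace ℝ (Fin n))‖
              + ‖(t • q) * (↑w₁⁻¹ : EuclideanSpace ℝ (Fin n) →L[ℝ] EuclideanSpace ℝ (Fin n))‖ :=
              norm_sub_le _ _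
          _ ≤ 1 + ‖t • q‖ * ‖(↑w₁⁻¹ : EuclideanSpace ℝ (Fin n) →L[ℝ] EuclideanSpace ℝ (Fin n))‖ := by
              gcongr
              exact norm_mul_le _ _
      nlinarith [norm_nonneg (↑w₁⁻¹ : EuclideanSpace ℝ (Fin n) →L[ℝ] EuclideanSpace ℝ (Fin n)), htq]
    have hvinvnorm : ‖(↑v⁻¹ : EuclideanSpace ℝ (Fin n) →L[ℝ] EuclideanSpace ℝ (Fin n))‖ ≤ 2*K := by
      have h7 : (↑v⁻¹ : EuclideanSpace ℝ (Fin n) →L[ℝ] EuclideanSpace ℝ (Fin n))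
          = ↑w₁⁻¹ * ↑u⁻¹ := by
        rw [hvdef, mul_inv_rev, Units.val_mul]
      calc ‖(↑v⁻¹ : EuclideanSpace ℝ (Fin n) →L[ℝ] EuclideanSpace ℝ (Fin n))‖
          = ‖(↑w₁⁻¹ : EuclideanSpace ℝ (Fin n) →L[ℝ] EuclideanSpace ℝ (Fin n)) * ↑u⁻¹‖ := by
            rw [h7]
        _ ≤ ‖(↑w₁⁻¹ : EuclideanSpace ℝ (Fin n) →L[ℝ] EuclideanSpace ℝ (Fin n))‖ * K :=
            norm_mul_le _ _
        _ ≤ 2 * K := by gcongr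
    refine ⟨hMunit, ?_, hMinv ▸ hvinvnorm⟩
    have hterm : ∀ (k : ℕ) (Z : EuclideanSpace ℝ (Fin n) →L[ℝ] EuclideanSpace ℝ (Fin n)),
        (-1 : EuclideanSpace ℝ (Fin n) →L[ℝ] EuclideanSpace ℝ (Fin n))^k
          * (((↑u⁻¹ : EuclideanSpace ℝ (Fin n) →L[ℝ] EuclideanSpace ℝ (Fin n)) * (t • φ D))^k * Z)
          = (-t)^k • (q^k * Z) := by
      intro k Z
      have h8 : (↑u⁻¹ : EuclideanSpace ℝ (Fin n) →L[ℝ] EuclideanSpace ℝ (Fin n)) * (t • φ D)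
          = t • q := by rw [clm_mul_smul, hq]
      have h9 : (-1 : EuclideanSpace ℝ (Fin n) →L[ℝ] EuclideanSpace ℝ (Fin n))
          = (-1 : ℝ) • (1 : EuclideanSpace ℝ (Fin n) →L[ℝ] EuclideanSpace ℝ (Fin n)) := by
        rw [neg_smul (1:ℝ) (1 : EuclideanSpace ℝ (Fin n) →L[ℝ] EuclideanSpace ℝ (Fin n)),
          one_smul]
      rw [h8, clm_smul_pow, clm_smul_mul, h9, clm_smul_pow, one_pow, clm_smul_mul, one_mul,
        smul_smul, ← neg_pow]
    have Hexp := inv_expansion' u v (t • φ D) (by rw [hv, hu]) (2*m)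
    rw [hMinv]
    calc (↑v⁻¹ : EuclideanSpace ℝ (Fin n) →L[ℝ] EuclideanSpace ℝ (Fin n))
        = (∑ k ∈ Finset.range (2*m),
            (-1 : EuclideanSpace ℝ (Fin n) →L[ℝ] EuclideanSpace ℝ (Fin n))^k
              * (((↑u⁻¹ : EuclideanSpace ℝ (Fin n) →L[ℝ] EuclideanSpace ℝ (Fin n))
                  * (t • φ D))^k * ↑u⁻¹))
          + (-1 : EuclideanSpace ℝ (Fin n) →L[ℝ] EuclideanSpace ℝ (Fin n))^(2*m)
              * (((↑u⁻¹ : EuclideanSpace ℝ (Fin n) →L[ℝ] EuclideanSpace ℝ (Fin n))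
                  * (t • φ D))^(2*m) * ↑v⁻¹) := Hexp
      _ = (∑ k ∈ Finset.range (2*m),
            (-t)^k • (q^k * (↑u⁻¹ : EuclideanSpace ℝ (Fin n) →L[ℝ] EuclideanSpace ℝ (Fin n))))
          + t^(2*m) • (q^(2*m) * ↑v⁻¹) := by
          rw [hterm (2*m) ↑v⁻¹, (even_two_mul m).neg_pow t]
          exact congrArg₂ _ (Finset.sum_congr rfl fun k _ => hterm k _) rfl
  -- coefficients and constants
  obtain ⟨β, hβ⟩ := exists_beta' m
  set C : ℝ := (∑ α : Fin m, |β α| * (((α:ℕ)+1:ℝ))^(2*m)) * ‖q‖^(2*m) * (2*K) + 1 with hC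
  have hCpos : 0 < C := by
    have h0 : 0 ≤ (∑ α : Fin m, |β α| * (((α:ℕ)+1:ℝ))^(2*m)) * ‖q‖^(2*m) * (2*K) := by
      have : 0 ≤ ∑ α : Fin m, |β α| * (((α:ℕ)+1:ℝ))^(2*m) :=
        Finset.sum_nonneg fun α _ => by positivity
      positivity
    linarith
  set ε₀ : ℝ := 1 / (2 * ((m:ℝ)+1) * (K * Kd + 1)) with hε₀
  have hε₀pos : 0 < ε₀ := by positivity
  refine ⟨β, C, hCpos, ε₀, hε₀pos, fun ε hε hεlt => ?_⟩
  have hsmall : ∀ α : Fin m, |(((α:ℕ)+1:ℝ)) * ε| * (K * Kd) < 1/2 := by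
    intro α
    have h1 : (((α:ℕ)+1:ℝ)) ≤ m := by exact_mod_cast Nat.succ_le_of_lt α.2
    have h2 : |(((α:ℕ)+1:ℝ)) * ε| = (((α:ℕ)+1:ℝ)) * |ε| := by
      rw [abs_mul, abs_of_nonneg (by positivity : (0:ℝ) ≤ (((α:ℕ)+1:ℝ)))]
    have h3 : (((α:ℕ)+1:ℝ)) * |ε| < ((m:ℝ)+1) * ε₀ := by
      have h3a : (((α:ℕ)+1:ℝ)) * |ε| ≤ (m:ℝ) * |ε| :=
        mul_le_mul_of_nonneg_right h1 (abs_nonneg ε)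
      have h3b : (m:ℝ) * |ε| ≤ (m:ℝ) * ε₀ :=
        mul_le_mul_of_nonneg_left (le_of_lt hεlt) (Nat.cast_nonneg m)
      have h3c : (m:ℝ) * ε₀ < ((m:ℝ)+1) * ε₀ := by
        apply mul_lt_mul_of_pos_right (by linarith) hε₀pos
      linarith
    have h5 : ((m:ℝ)+1) * ε₀ * (K * Kd) < 1/2 := by
      have hxe : ((m:ℝ)+1) * ε₀ * (K * Kd) = (K*Kd)/(2*(K*Kd+1)) := by
        rw [hε₀]; field_simp
      rw [hxe, div_lt_iff₀ (by positivity)]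
      nlinarith [mul_nonneg hKnn hKdnn]
    rw [h2]
    calc (((α:ℕ)+1:ℝ)) * |ε| * (K * Kd) ≤ ((m:ℝ)+1) * ε₀ * (K * Kd) :=
          mul_le_mul_of_nonneg_right h3.le (mul_nonneg hKnn hKdnn)
      _ < 1/2 := h5
  have hsmall' : ∀ α : Fin m, |-((((α:ℕ)+1:ℝ)) * ε)| * (K * Kd) < 1/2 := by
    intro α; rw [abs_neg]; exact hsmall α
  have hsub : ∀ α : Fin m,
      A + (-((((α:ℕ)+1:ℝ)) * ε)) • D = A - ((((α:ℕ)+1:ℝ)) * ε) • D := by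
    intro α; rw [neg_smul, ← sub_eq_add_neg]
  have hTp := fun α : Fin m => hT ((((α:ℕ)+1:ℝ)) * ε) (hsmall α)
  have hTm := fun α : Fin m => hT (-((((α:ℕ)+1:ℝ)) * ε)) (hsmall' α)
  constructor
  · intro α
    exact ⟨(hTp α).1, (hsub α) ▸ (hTm α).1⟩
  -- notation
  set c : Fin m → ℝ := fun α => (((α:ℕ)+1:ℝ)) * ε with hc
  set g : ℕ → (EuclideanSpace ℝ (Fin n) →L[ℝ] EuclideanSpace ℝ (Fin n)) :=
    fun k => q^k * (↑u⁻¹ : EuclideanSpace ℝ (Fin n) →L[ℝ] EuclideanSpace ℝ (Fin n)) with hg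
  set P : Fin m → (EuclideanSpace ℝ (Fin n) →L[ℝ] EuclideanSpace ℝ (Fin n)) :=
    fun α => φ ((A + (c α) • D)⁻¹) with hP
  set Q : Fin m → (EuclideanSpace ℝ (Fin n) →L[ℝ] EuclideanSpace ℝ (Fin n)) :=
    fun α => φ ((A - (c α) • D)⁻¹) with hQ
  have hPexp : ∀ α : Fin m, P α = (∑ k ∈ Finset.range (2*m), (-(c α))^k • g k)
      + (c α)^(2*m) • (q^(2*m) * P α) := fun α => (hTp α).2.1
  have hQexp : ∀ α : Fin m, Q α = (∑ k ∈ Finset.range (2*m), (c α)^k • g k)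
      + (c α)^(2*m) • (q^(2*m) * Q α) := by
    intro α
    have h' := (hTm α).2.1
    rw [hsub α] at h'
    rw [Even.neg_pow (even_two_mul m)] at h'
    simp only [neg_neg] at h'
    exact h'
  have hPn : ∀ α : Fin m, ‖P α‖ ≤ 2*K := fun α => (hTp α).2.2
  have hQn : ∀ α : Fin m, ‖Q α‖ ≤ 2*K := by
    intro α
    have := (hTm α).2.2
    rw [hsub α] at this
    exact this
  -- expansion of the average S α := (1/2) • (P α + Q α)
  have hSexp : ∀ α : Fin m, (1/2:ℝ) • (P α + Q α)
      = (∑ j ∈ Finset.range m, (c α)^(2*j) • g (2*j))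
        + (c α)^(2*m) • (q^(2*m) * ((1/2:ℝ) • (P α + Q α))) := by
    intro α
    have h1 : P α + Q α = (∑ k ∈ Finset.range (2*m), ((-(c α))^k + (c α)^k) • g k)
        + (c α)^(2*m) • (q^(2*m) * (P α + Q α)) := by
      calc P α + Q α
          = ((∑ k ∈ Finset.range (2*m), (-(c α))^k • g k) + (c α)^(2*m) • (q^(2*m) * P α))
            + ((∑ k ∈ Finset.range (2*m), (c α)^k • g k) + (c α)^(2*m) • (q^(2*m) * Q α)) :=
            congrArg₂ (·+·) (hPexp α) (hQexp α)
        _ = ((∑ k ∈ Finset.range (2*m), (-(c α))^k • g k)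
              + (∑ k ∈ Finset.range (2*m), (c α)^k • g k))
            + ((c α)^(2*m) • (q^(2*m) * P α) + (c α)^(2*m) • (q^(2*m) * Q α)) :=
            add_add_add_comm _ _ _ _
        _ = (∑ k ∈ Finset.range (2*m), ((-(c α))^k + (c α)^k) • g k)
            + (c α)^(2*m) • (q^(2*m) * (P α + Q α)) := by
            rw [← Finset.sum_add_distrib]
            congr 1
            · exact Finset.sum_congr rfl fun k _ => (add_smul _ _ _).symm
            · rw [← smul_add ((c α)^(2*m)) (q^(2*m) * P α), ← mul_add]
    have h2 : (∑ k ∈ Finset.range (2*m), ((-(c α))^k + (c α)^k) • g k)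
        = ∑ j ∈ Finset.range m, (2*(c α)^(2*j)) • g (2*j) := by
      rw [sum_range_two_mul']
      refine Finset.sum_congr rfl fun j _ => ?_
      have he : (-(c α))^(2*j) + (c α)^(2*j) = 2*(c α)^(2*j) := by
        rw [(even_two_mul j).neg_pow (c α)]; ring
      have ho : (-(c α))^(2*j+1) + (c α)^(2*j+1) = 0 := by
        rw [(odd_two_mul_add_one j).neg_pow (c α)]; ring
      rw [he, ho, zero_smul ℝ (g (2*j+1)), add_zero]
    have h3 : (1/2:ℝ) • (∑ j ∈ Finset.range m, (2*(c α)^(2*j)) • g (2*j))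
        = ∑ j ∈ Finset.range m, (c α)^(2*j) • g (2*j) := by
      rw [Finset.smul_sum]
      refine Finset.sum_congr rfl fun j _ => ?_
      rw [smul_smul]
      congr 1
      ring
    calc (1/2:ℝ) • (P α + Q α)
        = (1/2:ℝ) • ((∑ j ∈ Finset.range m, (2*(c α)^(2*j)) • g (2*j))
            + (c α)^(2*m) • (q^(2*m) * (P α + Q α))) := by rw [← h2, ← h1]
      _ = (∑ j ∈ Finset.range m, (c α)^(2*j) • g (2*j))
          + (c α)^(2*m) • (q^(2*m) * ((1/2:ℝ) • (P α + Q α))) := by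
          rw [smul_add, h3, clm_mul_smul, smul_comm ((1/2:ℝ)) ((c α)^(2*m))]
  -- the linear combination identity
  have hsum : (∑ α : Fin m, β α • ((1/2:ℝ) • (P α + Q α)))
      = (↑u⁻¹ : EuclideanSpace ℝ (Fin n) →L[ℝ] EuclideanSpace ℝ (Fin n))
        + ∑ α : Fin m, (β α * (c α)^(2*m)) • (q^(2*m) * ((1/2:ℝ) • (P α + Q α))) := by
    have step1 : ∀ α : Fin m, β α • ((1/2:ℝ) • (P α + Q α))
        = (∑ j ∈ Finset.range m, (β α * (c α)^(2*j)) • g (2*j))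
          + (β α * (c α)^(2*m)) • (q^(2*m) * ((1/2:ℝ) • (P α + Q α))) := by
      intro α
      nth_rewrite 1 [hSexp α]
      rw [smul_add, Finset.smul_sum]
      congr 1
      · exact Finset.sum_congr rfl fun j _ => smul_smul _ _ _
      · rw [smul_smul]
    calc ∑ α : Fin m, β α • ((1/2:ℝ) • (P α + Q α))
        = ∑ α : Fin m, ((∑ j ∈ Finset.range m, (β α * (c α)^(2*j)) • g (2*j))
            + (β α * (c α)^(2*m)) • (q^(2*m) * ((1/2:ℝ) • (P α + Q α)))) :=
          Finset.sum_congr rfl fun α _ => step1 α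
      _ = (∑ α : Fin m, ∑ j ∈ Finset.range m, (β α * (c α)^(2*j)) • g (2*j))
          + ∑ α : Fin m, (β α * (c α)^(2*m)) • (q^(2*m) * ((1/2:ℝ) • (P α + Q α))) :=
          Finset.sum_add_distrib
      _ = (↑u⁻¹ : EuclideanSpace ℝ (Fin n) →L[ℝ] EuclideanSpace ℝ (Fin n))
          + ∑ α : Fin m, (β α * (c α)^(2*m)) • (q^(2*m) * ((1/2:ℝ) • (P α + Q α))) := by
          congr 1
          rw [Finset.sum_comm]
          have hj : ∀ j ∈ Finset.range m, (∑ α : Fin m, (β α * (c α)^(2*j)) • g (2*j))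
              = ((if j = 0 then (1:ℝ) else 0) * ε^(2*j)) • g (2*j) := by
            intro j hjm
            have hco : ∀ α : Fin m, β α * (c α)^(2*j)
                = (β α * ((((α:ℕ)+1:ℝ))^2)^j) * ε^(2*j) := by
              intro α
              have hcc : (c α)^(2*j) = ((((α:ℕ)+1:ℝ))^2)^j * ε^(2*j) := by
                show ((((α:ℕ)+1:ℝ)) * ε)^(2*j) = _
                rw [mul_pow, pow_mul]
              rw [hcc]
              ring
            calc ∑ α : Fin m, (β α * (c α)^(2*j)) • g (2*j)
                = ∑ α : Fin m, ((β α * ((((α:ℕ)+1:ℝ))^2)^j) * ε^(2*j)) • g (2*j) :=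
                  Finset.sum_congr rfl fun α _ => by rw [hco α]
              _ = ((∑ α : Fin m, β α * ((((α:ℕ)+1:ℝ))^2)^j) * ε^(2*j)) • g (2*j) := by
                  rw [← Finset.sum_smul, ← Finset.sum_mul]
              _ = ((if j = 0 then (1:ℝ) else 0) * ε^(2*j)) • g (2*j) := by
                  rw [hβ j (Finset.mem_range.mp hjm)]
          rw [Finset.sum_congr rfl hj]
          have hj2 : ∀ j ∈ Finset.range m, ((if j = 0 then (1:ℝ) else 0) * ε^(2*j)) • g (2*j)
              = if j = 0 then g 0 else 0 := by
            intro j _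
            by_cases h : j = 0
            · simp [h]
            · rw [if_neg h, if_neg h, zero_mul, zero_smul ℝ (g (2*j))]
          rw [Finset.sum_congr rfl hj2, Finset.sum_ite_eq' (Finset.range m) 0]
          rw [if_pos (Finset.mem_range.mpr hm)]
          show q^0 * _ = _
          rw [pow_zero, one_mul]
  -- express the error vector
  have hAinv : φ (A⁻¹) = (↑u⁻¹ : EuclideanSpace ℝ (Fin n) →L[ℝ] EuclideanSpace ℝ (Fin n)) := by
    have hdetA : IsUnit A.det := (Matrix.isUnit_iff_isUnit_det A).mp hA
    have h4 : φ (A⁻¹) * ↑u = 1 := by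
      rw [hu, ← map_mul, Matrix.nonsing_inv_mul _ hdetA, map_one]
    exact (Units.inv_eq_of_mul_eq_one_left h4).symm
  have hxhat : ∀ α : Fin m, xhat A D b ε ((α:ℕ)+1) = ((1/2:ℝ) • (P α + Q α)) b := by
    intro α
    show (1/2:ℝ) • (mulVecE (A + ((((α:ℕ)+1:ℝ)) * ε) • D)⁻¹ b
        + mulVecE (A - ((((α:ℕ)+1:ℝ)) * ε) • D)⁻¹ b) = _
    rw [hPhi, hPhi, ContinuousLinearMap.smul_apply, ContinuousLinearMap.add_apply]
  have hvec : (∑ α : Fin m, β α • xhat A D b ε ((α:ℕ)+1)) - mulVecE A⁻¹ b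
      = (∑ α : Fin m, (β α * (c α)^(2*m)) • (q^(2*m) * ((1/2:ℝ) • (P α + Q α)))) b := by
    have h5 : (∑ α : Fin m, β α • xhat A D b ε ((α:ℕ)+1))
        = (∑ α : Fin m, β α • ((1/2:ℝ) • (P α + Q α))) b := by
      rw [ContinuousLinearMap.sum_apply]
      refine Finset.sum_congr rfl fun α _ => ?_
      rw [hxhat α]
      simp only [ContinuousLinearMap.smul_apply]
    rw [h5, hPhi, hAinv, hsum, ContinuousLinearMap.add_apply]
    exact add_sub_cancel_left _ _
  rw [hvec]
  -- norm estimate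
  have hα : ∀ α : Fin m, ‖(β α * (c α)^(2*m)) • (q^(2*m) * ((1/2:ℝ) • (P α + Q α)))‖
      ≤ (|β α| * (((α:ℕ)+1:ℝ))^(2*m)) * (‖q‖^(2*m) * (2*K) * |ε|^(2*m)) := by
    intro α
    have hS : ‖(1/2:ℝ) • (P α + Q α)‖ ≤ 2*K := by
      rw [norm_smul ((1/2:ℝ)) (P α + Q α), Real.norm_eq_abs]
      have h1 := hPn α
      have h2 := hQn α
      have h3 : ‖P α + Q α‖ ≤ ‖P α‖ + ‖Q α‖ := norm_add_le _ _
      have h4 : |(1/2 : ℝ)| = 1/2 := by norm_num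
      rw [h4]
      nlinarith
    have hqm : ‖q^(2*m) * ((1/2:ℝ) • (P α + Q α))‖ ≤ ‖q‖^(2*m) * (2*K) := by
      calc ‖q^(2*m) * ((1/2:ℝ) • (P α + Q α))‖
          ≤ ‖q^(2*m)‖ * ‖(1/2:ℝ) • (P α + Q α)‖ := norm_mul_le _ _
        _ ≤ ‖q‖^(2*m) * (2*K) := by
            apply mul_le_mul (norm_pow_le' q (by positivity)) hS (norm_nonneg _) (by positivity)
    have hcabs : |c α| = (((α:ℕ)+1:ℝ)) * |ε| := by
      show |(((α:ℕ)+1:ℝ)) * ε| = _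
      rw [abs_mul, abs_of_nonneg (by positivity : (0:ℝ) ≤ (((α:ℕ)+1:ℝ)))]
    calc ‖(β α * (c α)^(2*m)) • (q^(2*m) * ((1/2:ℝ) • (P α + Q α)))‖
        = |β α * (c α)^(2*m)| * ‖q^(2*m) * ((1/2:ℝ) • (P α + Q α))‖ := by
          rw [norm_smul (β α * (c α)^(2*m)) (q^(2*m) * ((1/2:ℝ) • (P α + Q α))),
            Real.norm_eq_abs]
      _ ≤ |β α * (c α)^(2*m)| * (‖q‖^(2*m) * (2*K)) :=
          mul_le_mul_of_nonneg_left hqm (abs_nonneg _)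
      _ = (|β α| * (((α:ℕ)+1:ℝ))^(2*m)) * (‖q‖^(2*m) * (2*K) * |ε|^(2*m)) := by
          rw [abs_mul, abs_pow, hcabs, mul_pow]
          ring
  have hC1 : (∑ α : Fin m, (|β α| * (((α:ℕ)+1:ℝ))^(2*m)) * (‖q‖^(2*m) * (2*K) * |ε|^(2*m)))
      = ((∑ α : Fin m, |β α| * (((α:ℕ)+1:ℝ))^(2*m)) * ‖q‖^(2*m) * (2*K)) * |ε|^(2*m) := by
    rw [← Finset.sum_mul]
    ring
  calc ‖(∑ α : Fin m, (β α * (c α)^(2*m)) • (q^(2*m) * ((1/2:ℝ) • (P α + Q α)))) b‖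
      ≤ ‖∑ α : Fin m, (β α * (c α)^(2*m)) • (q^(2*m) * ((1/2:ℝ) • (P α + Q α)))‖ * ‖b‖ :=
        ContinuousLinearMap.le_opNorm _ b
    _ = ‖∑ α : Fin m, (β α * (c α)^(2*m)) • (q^(2*m) * ((1/2:ℝ) • (P α + Q α)))‖ := by
        rw [hb, mul_one]
    _ ≤ ∑ α : Fin m, ‖(β α * (c α)^(2*m)) • (q^(2*m) * ((1/2:ℝ) • (P α + Q α)))‖ :=
        norm_sum_le _ _
    _ ≤ ∑ α : Fin m, (|β α| * (((α:ℕ)+1:ℝ))^(2*m)) * (‖q‖^(2*m) * (2*K) * |ε|^(2*m)) :=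
        Finset.sum_le_sum fun α _ => hα α
    _ = ((∑ α : Fin m, |β α| * (((α:ℕ)+1:ℝ))^(2*m)) * ‖q‖^(2*m) * (2*K)) * |ε|^(2*m) := hC1
    _ ≤ C * |ε|^(2*m) := by
        have hεnn : 0 ≤ |ε|^(2*m) := by positivity
        have : (∑ α : Fin m, |β α| * (((α:ℕ)+1:ℝ))^(2*m)) * ‖q‖^(2*m) * (2*K) ≤ C := by
          rw [hC]; linarith
        exact mul_le_mul_of_nonneg_right this hεnn
end

section
/- Let n be a positive integer, let A be an invertible n×n real matrix, let D be an n×n real matrix, let b ∈ ℝⁿ, and let ε be a real number with 2 · |ε| · ‖A⁻¹ * D‖ < 1, where ‖·‖ is the operator norm induced by the Euclidean vector norm. For α ∈ {1, 2} define x̂_α := (1/2)((A + (α·ε) • D)⁻¹ b + (A − (α·ε) • D)⁻¹ b). Then (x̂₂ − 4 x̂₁)/(−3) = A⁻¹ b + Σ_{k=2}^∞ ((4 − 4^k)/3) • ((ε • (A⁻¹ * D))^{2k} * A⁻¹) b; in particular the ε² term is cancelled and the coefficients of the ε⁴ and ε⁶ terms are −4 and −20, respectively. -/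
open scoped Matrix.Norms.L2Operator

namespace MTwo
variable {n : ℕ}

noncomputable def LM (C : Matrix (Fin n) (Fin n) ℝ) (b : EuclideanSpace ℝ (Fin n)) :
    Matrix (Fin n) (Fin n) ℝ →L[ℝ] EuclideanSpace ℝ (Fin n) :=
  LinearMap.toContinuousLinearMap
  { toFun := fun M => mulVecE (M * C) b
    map_add' := fun M N => by
      simp [mulVecE, add_mul, Matrix.add_mulVec, WithLp.toLp_add]
    map_smul' := fun c M => by
      simp [mulVecE, smul_mul_assoc, Matrix.smul_mulVec, WithLp.toLp_smul] }

@[simp] lemma LM_apply (C : Matrix (Fin n) (Fin n) ℝ) (b : EuclideanSpace ℝ (Fin n))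
    (M : Matrix (Fin n) (Fin n) ℝ) : LM C b M = mulVecE (M * C) b := rfl

lemma inv_one_sub_eq (t : Matrix (Fin n) (Fin n) ℝ) (h : ‖t‖ < 1) :
    (1 - t)⁻¹ = ∑' k : ℕ, t ^ k := by
  rw [Matrix.nonsing_inv_eq_ringInverse, ← geom_series_eq_inverse t h]

lemma summable_even (s : Matrix (Fin n) (Fin n) ℝ) (h : ‖s‖ < 1) :
    Summable fun k : ℕ => s ^ (2 * k) := by
  have h2 : ‖s ^ 2‖ < 1 := by
    have hle : ‖s ^ 2‖ ≤ ‖s‖ * ‖s‖ := by rw [sq]; exact norm_mul_le _ _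
    nlinarith [norm_nonneg s]
  simpa [pow_mul] using summable_geometric_of_norm_lt_one h2

lemma inv_add_inv_eq (s : Matrix (Fin n) (Fin n) ℝ) (h : ‖s‖ < 1) :
    (1 + s)⁻¹ + (1 - s)⁻¹ = (2 : ℝ) • ∑' k : ℕ, s ^ (2 * k) := by
  have hneg : ‖-s‖ < 1 := by rwa [norm_neg]
  have hP : IsUnit (1 + s) := by
    have := isUnit_one_sub_of_norm_lt_one hneg
    rwa [sub_neg_eq_add] at this
  have hQ : IsUnit (1 - s) := isUnit_one_sub_of_norm_lt_one h
  have h2 : ‖s ^ 2‖ < 1 := by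
    have hle : ‖s ^ 2‖ ≤ ‖s‖ * ‖s‖ := by rw [sq]; exact norm_mul_le _ _
    nlinarith [norm_nonneg s]
  have h1 : (1 - s) * (1 - s)⁻¹ = 1 :=
    Matrix.mul_nonsing_inv _ ((Matrix.isUnit_iff_isUnit_det _).mp hQ)
  have h2' : (1 + s)⁻¹ * (1 + s) = 1 :=
    Matrix.nonsing_inv_mul _ ((Matrix.isUnit_iff_isUnit_det _).mp hP)
  have key : (1 + s)⁻¹ + (1 - s)⁻¹ = (2 : ℝ) • ((1 - s) * (1 + s))⁻¹ := by
    have expand : (1 + s)⁻¹ + (1 - s)⁻¹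
        = (1 + s)⁻¹ * (((1 - s) + (1 + s)) * (1 - s)⁻¹) := by
      rw [add_mul, mul_add, ← mul_assoc, ← mul_assoc, h2', one_mul, mul_assoc, h1, mul_one,
        add_comm]
    have two_eq : (1 - s) + (1 + s) = (2 : ℝ) • (1 : Matrix (Fin n) (Fin n) ℝ) := by
      rw [two_smul]; abel
    rw [expand, two_eq, smul_mul_assoc, one_mul, mul_smul_comm, Matrix.mul_inv_rev]
  have prod_eq : (1 - s) * (1 + s) = 1 - s ^ 2 := by noncomm_ring
  rw [key, prod_eq, inv_one_sub_eq _ h2]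
  congr 1
  simp [pow_mul]

lemma xhat_eq (A D : Matrix (Fin n) (Fin n) ℝ) (hA : IsUnit A)
    (b : EuclideanSpace ℝ (Fin n)) (ε α : ℝ)
    (h : ‖(α * ε) • (A⁻¹ * D)‖ < 1) :
    xhat A D b ε α
      = ∑' k : ℕ, mulVecE (((α * ε) • (A⁻¹ * D)) ^ (2 * k) * A⁻¹) b := by
  set s : Matrix (Fin n) (Fin n) ℝ := (α * ε) • (A⁻¹ * D) with hs
  have hAdet : IsUnit A.det := (Matrix.isUnit_iff_isUnit_det _).mp hA
  have hAA : A * A⁻¹ = 1 := Matrix.mul_nonsing_inv _ hAdet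
  have hplus : A + (α * ε) • D = A * (1 + s) := by
    rw [mul_add, mul_one, hs, Matrix.mul_smul, ← Matrix.mul_assoc, hAA, Matrix.one_mul]
  have hminus : A - (α * ε) • D = A * (1 - s) := by
    rw [mul_sub, mul_one, hs, Matrix.mul_smul, ← Matrix.mul_assoc, hAA, Matrix.one_mul]
  have : xhat A D b ε α
      = (1 / 2 : ℝ) • (LM A⁻¹ b (1 + s)⁻¹ + LM A⁻¹ b (1 - s)⁻¹) := by
    rw [xhat, hplus, hminus, Matrix.mul_inv_rev, Matrix.mul_inv_rev]
    rfl
  rw [this, ← map_add, inv_add_inv_eq s h, map_smul, smul_smul,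
    show (1 / 2 : ℝ) * 2 = 1 by norm_num, one_smul,
    (LM A⁻¹ b).map_tsum (summable_even s h)]
  rfl

end MTwo

/-- Example 1 (`m = 2`) series form: `(x̂₂ - 4 x̂₁)/(-3)` equals
`A⁻¹ b + ∑_{k ≥ 2} ((4 - 4^k)/3) • ((ε • (A⁻¹ D))^(2k) A⁻¹) b`; in particular the `ε²`
term is cancelled and the coefficients of the `ε⁴` and `ε⁶` terms are `-4` and `-20`. -/
theorem m_two_combination_series (n : ℕ) (hn : 0 < n)
    (A D : Matrix (Fin n) (Fin n) ℝ) (hA : IsUnit A) (b : EuclideanSpace ℝ (Fin n))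
    (ε : ℝ) (hε : 2 * |ε| * ‖A⁻¹ * D‖ < 1) :
    ((-3 : ℝ)⁻¹) • (xhat A D b ε 2 - (4 : ℝ) • xhat A D b ε 1)
        = mulVecE A⁻¹ b
            + ∑' k : ℕ, (((4 : ℝ) - 4 ^ (k + 2)) / 3) •
                mulVecE ((ε • (A⁻¹ * D)) ^ (2 * (k + 2)) * A⁻¹) b ∧
      (((4 : ℝ) - 4 ^ (2 : ℕ)) / 3) = -4 ∧ (((4 : ℝ) - 4 ^ (3 : ℕ)) / 3) = -20 := by
  refine ⟨?_, by norm_num, by norm_num⟩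
  set B : Matrix (Fin n) (Fin n) ℝ := A⁻¹ * D with hBdef
  have hnormB : (0 : ℝ) ≤ |ε| * ‖B‖ := mul_nonneg (abs_nonneg _) (norm_nonneg _)
  have h2 : ‖(2 * ε) • B‖ < 1 := by
    rw [norm_smul, Real.norm_eq_abs, abs_mul]
    simpa [mul_assoc] using hε
  have h1 : ‖(1 * ε) • B‖ < 1 := by
    rw [norm_smul, Real.norm_eq_abs, one_mul]
    nlinarith
  have hx2 := MTwo.xhat_eq A D hA b ε 2 h2
  have hx1 := MTwo.xhat_eq A D hA b ε 1 h1
  set s1 : Matrix (Fin n) (Fin n) ℝ := ε • B with hs1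
  have hs1n : ‖s1‖ < 1 := by simpa [hs1] using h1
  -- summability of the building blocks
  have hsum1 : Summable fun k : ℕ => MTwo.LM A⁻¹ b (s1 ^ (2 * k)) :=
    ((MTwo.summable_even s1 hs1n).map (MTwo.LM A⁻¹ b).toLinearMap.toAddMonoidHom
      (MTwo.LM A⁻¹ b).continuous)
  have hs2eq : ∀ k : ℕ, ((2 * ε) • B) ^ (2 * k) = ((4 : ℝ) ^ k) • s1 ^ (2 * k) := by
    intro k
    have : (2 * ε) • B = (2 : ℝ) • s1 := by rw [hs1, smul_smul]
    rw [this, smul_pow]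
    congr 1
    rw [pow_mul]
    norm_num
  have hsum2 : Summable fun k : ℕ => MTwo.LM A⁻¹ b (((2 * ε) • B) ^ (2 * k)) :=
    ((MTwo.summable_even _ h2).map (MTwo.LM A⁻¹ b).toLinearMap.toAddMonoidHom
      (MTwo.LM A⁻¹ b).continuous)
  -- rewrite xhats as tsums of LM values
  have hx2' : xhat A D b ε 2 = ∑' k : ℕ, MTwo.LM A⁻¹ b (((2 * ε) • B) ^ (2 * k)) := hx2
  have hx1' : xhat A D b ε 1 = ∑' k : ℕ, MTwo.LM A⁻¹ b (s1 ^ (2 * k)) := by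
    rw [hx1]; simp [hs1, hBdef]
  -- combined series
  have hcomb : HasSum
      (fun k : ℕ => ((-3 : ℝ)⁻¹) • (MTwo.LM A⁻¹ b (((2 * ε) • B) ^ (2 * k))
        - (4 : ℝ) • MTwo.LM A⁻¹ b (s1 ^ (2 * k))))
      (((-3 : ℝ)⁻¹) • (xhat A D b ε 2 - (4 : ℝ) • xhat A D b ε 1)) := by
    rw [hx2', hx1']
    exact ((hsum2.hasSum.sub (hsum1.hasSum.const_smul _)).const_smul _)
  have hterm : (fun k : ℕ => ((-3 : ℝ)⁻¹) • (MTwo.LM A⁻¹ b (((2 * ε) • B) ^ (2 * k))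
        - (4 : ℝ) • MTwo.LM A⁻¹ b (s1 ^ (2 * k))))
      = fun k : ℕ => (((4 : ℝ) - 4 ^ k) / 3) • MTwo.LM A⁻¹ b (s1 ^ (2 * k)) := by
    funext k
    rw [hs2eq k, map_smul, ← sub_smul, smul_smul]
    congr 1
    ring
  rw [hterm] at hcomb
  have hFsum : Summable fun k : ℕ => (((4 : ℝ) - 4 ^ k) / 3) • MTwo.LM A⁻¹ b (s1 ^ (2 * k)) := by
    rw [← hterm]
    exact ((hsum2.sub (hsum1.const_smul _)).const_smul _)
  rw [← hcomb.tsum_eq]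
  -- now split off first two terms
  set F : ℕ → EuclideanSpace ℝ (Fin n) :=
    fun k => (((4 : ℝ) - 4 ^ k) / 3) • MTwo.LM A⁻¹ b (s1 ^ (2 * k)) with hF
  have hshift1 : Summable fun k : ℕ => F (k + 1) := (summable_nat_add_iff 1).mpr hFsum
  have h0 : ∑' k, F k = F 0 + ∑' k, F (k + 1) := Summable.tsum_eq_zero_add hFsum
  have h1' : ∑' k, F (k + 1) = F 1 + ∑' k, F (k + 2) := by
    have := Summable.tsum_eq_zero_add hshift1
    simpa using this
  have hF0 : F 0 = mulVecE A⁻¹ b := by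
    simp only [hF, pow_zero, mul_zero, Matrix.one_mul, MTwo.LM_apply]
    rw [show ((4 : ℝ) - 1) / 3 = 1 by norm_num, one_smul]
  have hF1 : F 1 = 0 := by
    simp only [hF, pow_one]
    rw [show ((4 : ℝ) - 4) / 3 = 0 by norm_num, zero_smul]
  rw [h0, h1', hF0, hF1, zero_add]
  rfl
end

section
/- Let n be a positive integer, let A be an invertible n×n real matrix, let D be an n×n real matrix, let b ∈ ℝⁿ, and let ε be a real number with 3 · |ε| · ‖A⁻¹ * D‖ < 1, where ‖·‖ is the operator norm induced by the Euclidean vector norm. For α ∈ {1, 3} define x̂_α := (1/2)((A + (α·ε) • D)⁻¹ b + (A − (α·ε) • D)⁻¹ b). Then the intermediate correction x̂₃₁ := (x̂₃ − 9 x̂₁)/(−8) has no ε² term: x̂₃₁ = A⁻¹ b + Σ_{k=2}^∞ ((9 − 9^k)/8) • ((ε • (A⁻¹ * D))^{2k} * A⁻¹) b. -/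
open scoped Matrix.Norms.L2Operator

set_option maxHeartbeats 2000000 in
/-- The intermediate correction `x̂₃₁ = (x̂₃ - 9 x̂₁)/(-8)` has no `ε²` term:
`x̂₃₁ = A⁻¹ b + ∑_{k ≥ 2} ((9 - 9^k)/8) • ((ε • (A⁻¹ D))^(2k) A⁻¹) b`. -/
theorem intermediate_correction_three_one (n : ℕ) (hn : 0 < n)
    (A D : Matrix (Fin n) (Fin n) ℝ) (hA : IsUnit A) (b : EuclideanSpace ℝ (Fin n))
    (ε : ℝ) (hε : 3 * |ε| * ‖A⁻¹ * D‖ < 1) :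
    ((-8 : ℝ)⁻¹) • (xhat A D b ε 3 - (9 : ℝ) • xhat A D b ε 1)
        = mulVecE A⁻¹ b
            + ∑' k : ℕ, (((9 : ℝ) - 9 ^ (k + 2)) / 8) •
                mulVecE ((ε • (A⁻¹ * D)) ^ (2 * (k + 2)) * A⁻¹) b := by
  classical
  set M : Matrix (Fin n) (Fin n) ℝ := A⁻¹ * D with hMdef
  have hAdet : IsUnit A.det := (Matrix.isUnit_iff_isUnit_det A).mp hA
  have hnorm : ∀ c : ℝ, ‖c • M‖ = |c| * ‖M‖ := fun c => by
    rw [norm_smul, Real.norm_eq_abs]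
  have hu : ‖ε • M‖ < 1 := by
    rw [hnorm]
    nlinarith [abs_nonneg ε, norm_nonneg M]
  have h3u : ‖(3 * ε) • M‖ < 1 := by
    rw [hnorm, abs_mul]
    simpa [abs_of_nonneg, mul_assoc] using hε
  -- the continuous linear map `X ↦ mulVecE X b`
  let φL : Matrix (Fin n) (Fin n) ℝ →ₗ[ℝ] EuclideanSpace ℝ (Fin n) :=
    { toFun := fun X => mulVecE X b
      map_add' := fun X Y => by
        simp only [mulVecE, Matrix.add_mulVec]; rfl
      map_smul' := fun c X => by
        simp only [mulVecE, Matrix.smul_mulVec, RingHom.id_apply]; rfl }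
  let Φ : Matrix (Fin n) (Fin n) ℝ →L[ℝ] EuclideanSpace ℝ (Fin n) :=
    LinearMap.toContinuousLinearMap φL
  have hΦ : ∀ X, Φ X = mulVecE X b := fun X => rfl
  have hevensq : ∀ t : Matrix (Fin n) (Fin n) ℝ, ‖t‖ < 1 → ‖t ^ 2‖ < 1 := by
    intro t ht
    calc ‖t ^ 2‖ ≤ ‖t‖ * ‖t‖ := by rw [sq]; exact norm_mul_le _ _
      _ < 1 := by nlinarith [norm_nonneg t]
  have hevensum : ∀ t : Matrix (Fin n) (Fin n) ℝ, ‖t‖ < 1 →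
      Summable (fun k : ℕ => t ^ (2 * k) * A⁻¹) := by
    intro t ht
    have := (summable_geometric_of_norm_lt_one (hevensq t ht)).mul_right A⁻¹
    simpa [← pow_mul] using this
  -- Neumann series expansion of the inverse
  have key : ∀ c : ℝ, ‖c • M‖ < 1 →
      (A + c • D)⁻¹ = (∑' k : ℕ, (-(c • M)) ^ k) * A⁻¹ := by
    intro c hc
    have hfac : A + c • D = A * (1 + c • M) := by
      rw [Matrix.mul_add, Matrix.mul_one, Matrix.mul_smul, hMdef, ← Matrix.mul_assoc,
        Matrix.mul_nonsing_inv A hAdet, Matrix.one_mul]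
    have hc' : ‖-(c • M)‖ < 1 := by rwa [norm_neg]
    have h1 : (1 + c • M : Matrix (Fin n) (Fin n) ℝ)⁻¹ = ∑' k : ℕ, (-(c • M)) ^ k := by
      rw [Matrix.nonsing_inv_eq_ringInverse, show (1 + c • M : Matrix (Fin n) (Fin n) ℝ)
          = 1 - -(c • M) from (sub_neg_eq_add 1 (c • M)).symm,
        ← geom_series_eq_inverse _ hc']
    rw [hfac, Matrix.mul_inv_rev, h1]
  -- even/odd combination
  have expand : ∀ c : ℝ, ‖c • M‖ < 1 →
      mulVecE (A + c • D)⁻¹ b + mulVecE (A - c • D)⁻¹ b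
        = ∑' k : ℕ, (2 : ℝ) • mulVecE ((c • M) ^ (2 * k) * A⁻¹) b := by
    intro c hc
    set t : Matrix (Fin n) (Fin n) ℝ := c • M with htdef
    have hc' : ‖-t‖ < 1 := by rwa [norm_neg]
    have hminus : A - c • D = A + (-c) • D := by
      rw [neg_smul, ← sub_eq_add_neg]
    have hkey2 : (A - c • D)⁻¹ = (∑' k : ℕ, t ^ k) * A⁻¹ := by
      rw [hminus, key (-c) (by rwa [neg_smul, norm_neg]), neg_smul, ← htdef, neg_neg]
    have hsum_neg : Summable (fun k : ℕ => (-t) ^ k) :=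
      summable_geometric_of_norm_lt_one hc'
    have hsum_pos : Summable (fun k : ℕ => t ^ k) :=
      summable_geometric_of_norm_lt_one hc
    have h2k : Summable (fun k : ℕ => t ^ (2 * k)) := by
      simpa [← pow_mul] using summable_geometric_of_norm_lt_one (hevensq t hc)
    -- matrix level even/odd
    have hmat : (∑' k : ℕ, (-t) ^ k) + (∑' k : ℕ, t ^ k)
        = ∑' k : ℕ, (2 : ℝ) • t ^ (2 * k) := by
      rw [← Summable.tsum_add hsum_neg hsum_pos]
      have heven : Summable (fun k : ℕ => (-t) ^ (2 * k) + t ^ (2 * k)) := by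
        simpa [Even.neg_pow (even_two_mul _)] using h2k.add h2k
      have hodd0 : (fun k : ℕ => (-t) ^ (2 * k + 1) + t ^ (2 * k + 1))
          = fun _ => (0 : Matrix (Fin n) (Fin n) ℝ) := by
        funext k
        rw [Odd.neg_pow ⟨k, rfl⟩, neg_add_cancel]
      have hodd : Summable (fun k : ℕ => (-t) ^ (2 * k + 1) + t ^ (2 * k + 1)) := by
        rw [hodd0]; exact summable_zero
      rw [← tsum_even_add_odd heven hodd, hodd0]
      simp only [tsum_zero, add_zero]
      congr 1
      funext k
      rw [Even.neg_pow (even_two_mul _), two_smul]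
    -- now apply Φ
    have hsum2 : Summable (fun k : ℕ => (2 : ℝ) • t ^ (2 * k) * A⁻¹) := by
      simpa [smul_mul_assoc] using (hevensum t hc).const_smul (2 : ℝ)
    calc mulVecE (A + c • D)⁻¹ b + mulVecE (A - c • D)⁻¹ b
        = Φ ((∑' k : ℕ, (-t) ^ k) * A⁻¹ + (∑' k : ℕ, t ^ k) * A⁻¹) := by
          rw [map_add, hΦ, hΦ, key c hc, hkey2]
      _ = Φ ((∑' k : ℕ, (2 : ℝ) • t ^ (2 * k)) * A⁻¹) := by
          rw [← add_mul, hmat]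
      _ = Φ (∑' k : ℕ, (2 : ℝ) • t ^ (2 * k) * A⁻¹) := by
          rw [Summable.tsum_mul_right _ (by
            simpa using h2k.const_smul (2 : ℝ))]
      _ = ∑' k : ℕ, Φ ((2 : ℝ) • t ^ (2 * k) * A⁻¹) := Φ.map_tsum hsum2
      _ = ∑' k : ℕ, (2 : ℝ) • mulVecE (t ^ (2 * k) * A⁻¹) b := by
          congr 1; funext k; rw [smul_mul_assoc, map_smul, hΦ]
  -- abbreviations
  set u : Matrix (Fin n) (Fin n) ℝ := ε • M with hudef
  set g : ℕ → EuclideanSpace ℝ (Fin n) := fun k => mulVecE (u ^ (2 * k) * A⁻¹) b with hgdef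
  have hg : Summable g := by
    have := (hevensum u hu).map Φ Φ.continuous
    simpa [Function.comp_def, hΦ, hgdef] using this
  have h3eq : ∀ k : ℕ, mulVecE (((3 * ε) • M) ^ (2 * k) * A⁻¹) b = (9 : ℝ) ^ k • g k := by
    intro k
    rw [mul_smul, ← hudef, smul_pow, smul_mul_assoc, ← hΦ, map_smul, hΦ, pow_mul]
    norm_num [hgdef]
  have hg9 : Summable (fun k : ℕ => (9 : ℝ) ^ k • g k) := by
    have := (hevensum _ h3u).map Φ Φ.continuous
    simpa [Function.comp_def, hΦ, h3eq] using this
  have hx1 : xhat A D b ε 1 = ∑' k : ℕ, g k := by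
    have e1 : ∑' k : ℕ, (2 : ℝ) • mulVecE ((ε • M) ^ (2 * k) * A⁻¹) b
        = (2 : ℝ) • ∑' k : ℕ, g k := Summable.tsum_const_smul _ hg
    rw [xhat, one_mul, expand ε hu, e1, smul_smul]
    norm_num
  have hx3 : xhat A D b ε 3 = ∑' k : ℕ, (9 : ℝ) ^ k • g k := by
    have e3 : ∑' k : ℕ, (2 : ℝ) • mulVecE (((3 * ε) • M) ^ (2 * k) * A⁻¹) b
        = (2 : ℝ) • ∑' k : ℕ, (9 : ℝ) ^ k • g k := by
      simp only [h3eq]; exact Summable.tsum_const_smul _ hg9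
    rw [xhat, expand _ h3u, e3, smul_smul]
    norm_num
  -- the coefficient series
  set h : ℕ → EuclideanSpace ℝ (Fin n) := fun k => (((9 : ℝ) - 9 ^ k) / 8) • g k with hhdef
  have hcoef : ∀ k : ℕ, ((-8 : ℝ)⁻¹) • ((9 : ℝ) ^ k • g k - (9 : ℝ) • g k) = h k := by
    intro k
    rw [hhdef, smul_sub, smul_smul, smul_smul, ← sub_smul]
    congr 1; ring
  have hsum_h : Summable h := by
    have : Summable (fun k : ℕ => ((-8 : ℝ)⁻¹) • ((9 : ℝ) ^ k • g k - (9 : ℝ) • g k)) :=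
      (hg9.sub (hg.const_smul (9 : ℝ))).const_smul _
    simpa only [hcoef] using this
  have hLHS : ((-8 : ℝ)⁻¹) • (xhat A D b ε 3 - (9 : ℝ) • xhat A D b ε 1) = ∑' k : ℕ, h k := by
    rw [hx3, hx1, ← Summable.tsum_const_smul _ hg, ← Summable.tsum_sub hg9 (hg.const_smul (9 : ℝ)),
      ← Summable.tsum_const_smul _ (hg9.sub (hg.const_smul (9 : ℝ)))]
    congr 1; funext k; exact hcoef k
  rw [hLHS, Summable.tsum_eq_zero_add hsum_h,
    Summable.tsum_eq_zero_add ((summable_nat_add_iff 1).mpr hsum_h)]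
  have hh0 : h 0 = mulVecE A⁻¹ b := by
    show ((9 - 9 ^ 0 : ℝ) / 8) • g 0 = mulVecE A⁻¹ b
    norm_num [hgdef]
  have hh1 : h 1 = 0 := by
    show ((9 - 9 ^ 1 : ℝ) / 8) • g 1 = 0
    norm_num
  rw [hh0, hh1, zero_add]
end
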